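/- Let w be a point of the open unit disc 𝔻 and let f(z) := (w − z)/(1 − conj(w)·z) be the conformal automorphism of 𝔻 interchanging the origin and w. Then Bf(z) = (|w|² − 1)/(1 − conj(w)·z), and sup_{z∈𝔻} |Bf(z)| = 1 + |w|, while sup_{z∈𝔻} |f(z)| = 1; that is, ‖Bf‖_∞ = (1 + |w|)·‖f‖_∞. -/

import Mathlib

open MeasureTheory Real Set

noncomputable section

/-- The backward shift operator: `Bf(z) = (f(z) - f(0))/z` for `z ≠ 0`, `Bf(0) = f'(0)`. -/
def bwdShift (f : ℂ → ℂ) : ℂ → ℂ :=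
  fun z => if z = 0 then deriv f 0 else (f z - f 0) / z

/-- The point `r·e^{iθ}`. -/
def circlePoint (r θ : ℝ) : ℂ := (r : ℂ) * Complex.exp ((θ : ℂ) * Complex.I)

/-- The integral mean `(1/2π)∫₀^{2π} |f(re^{iθ})| dθ`. -/
def hardyMean1 (f : ℂ → ℂ) (r : ℝ) : ℝ :=
  (2 * π)⁻¹ * ∫ θ in (0:ℝ)..(2 * π), ‖f (circlePoint r θ)‖

/-- Membership in the Hardy space `H¹` of the unit disc. -/
def MemHardy1 (f : ℂ → ℂ) : Prop :=
  DifferentiableOn ℂ f (Metric.ball (0:ℂ) 1) ∧ BddAbove (hardyMean1 f '' Set.Ioo 0 1)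

/-- The `H¹` norm: `sup_{0<r<1} (1/2π)∫₀^{2π} |f(re^{iθ})| dθ`. -/
def hardyNorm1 (f : ℂ → ℂ) : ℝ := sSup (hardyMean1 f '' Set.Ioo 0 1)

/-- `g` gives the radial boundary values of `f` for a.e. `θ ∈ (0, 2π]`. -/
def IsRadialLimit (f : ℂ → ℂ) (g : ℝ → ℂ) : Prop :=
  ∀ᵐ θ ∂(volume.restrict (Set.Ioc (0:ℝ) (2 * π))),
    Filter.Tendsto (fun r : ℝ => f (circlePoint r θ)) (nhdsWithin 1 (Set.Iio 1)) (nhds (g θ))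

/-- `I` is an inner function: bounded analytic on the disc with unimodular radial
boundary values almost everywhere. -/
def IsInnerFn (I : ℂ → ℂ) : Prop :=
  DifferentiableOn ℂ I (Metric.ball (0:ℂ) 1) ∧
  (∀ z ∈ Metric.ball (0:ℂ) 1, ‖I z‖ ≤ 1) ∧
  ∀ᵐ θ ∂(volume.restrict (Set.Ioc (0:ℝ) (2 * π))),
    ∃ w : ℂ, ‖w‖ = 1 ∧
      Filter.Tendsto (fun r : ℝ => I (circlePoint r θ)) (nhdsWithin 1 (Set.Iio 1)) (nhds w)

/-- The pointwise principal square root: `0` at `0`, and `√|w|·e^{i·Arg(w)/2}` otherwise. -/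
def psqrt (w : ℂ) : ℂ :=
  if w = 0 then 0
  else (Real.sqrt (‖w‖) : ℂ) * Complex.exp (((w.arg / 2 : ℝ) : ℂ) * Complex.I)

end

/-- The sup norm over the unit disc. -/
noncomputable def hInfNorm (f : ℂ → ℂ) : ℝ :=
  sSup ((fun z => ‖f z‖) '' Metric.ball (0:ℂ) 1)

/-- For the disc automorphism `f(z) = (w - z)/(1 - w̄z)` interchanging `0` and `w`, one has
`Bf(z) = (|w|² - 1)/(1 - w̄z)` on the disc, `‖Bf‖_∞ = 1 + |w|` and `‖f‖_∞ = 1`;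
that is, `‖Bf‖_∞ = (1 + |w|)·‖f‖_∞`. -/
theorem backward_shift_of_automorphism (w : ℂ) (hw : w ∈ Metric.ball (0:ℂ) 1)
    (f : ℂ → ℂ) (hf : ∀ z, f z = (w - z) / (1 - (starRingEnd ℂ) w * z)) :
    (∀ z ∈ Metric.ball (0:ℂ) 1,
        bwdShift f z = (((‖w‖ : ℝ) : ℂ) ^ 2 - 1) / (1 - (starRingEnd ℂ) w * z)) ∧
      hInfNorm (bwdShift f) = 1 + ‖w‖ ∧
      hInfNorm f = 1 ∧
      hInfNorm (bwdShift f) = (1 + ‖w‖) * hInfNorm f := by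
  set a := ‖w‖ with ha_def
  have ha : a < 1 := by simpa using mem_ball_zero_iff.mp hw
  have ha0 : (0:ℝ) ≤ a := norm_nonneg w
  have hww : ((a : ℝ) : ℂ) ^ 2 = w * (starRingEnd ℂ) w := by
    rw [Complex.mul_conj, ← Complex.sq_norm]; norm_cast
  -- denominator bounds
  have hdlb : ∀ z : ℂ, ‖z‖ < 1 → 1 - a ≤ ‖1 - (starRingEnd ℂ) w * z‖ := by
    intro z hz
    have h := norm_sub_norm_le (1 : ℂ) ((starRingEnd ℂ) w * z)
    simp only [norm_one, norm_mul, Complex.norm_conj] at h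
    nlinarith [norm_nonneg z]
  have hden : ∀ z : ℂ, ‖z‖ < 1 → (1 : ℂ) - (starRingEnd ℂ) w * z ≠ 0 := by
    intro z hz h
    have h2 := hdlb z hz
    rw [h] at h2
    simp at h2
    linarith
  -- part 1
  have part1 : ∀ z ∈ Metric.ball (0:ℂ) 1,
      bwdShift f z = (((a : ℝ) : ℂ) ^ 2 - 1) / (1 - (starRingEnd ℂ) w * z) := by
    intro z hz
    have hz1 : ‖z‖ < 1 := by simpa using mem_ball_zero_iff.mp hz
    have hdz : (1 : ℂ) - (starRingEnd ℂ) w * z ≠ 0 := hden z hz1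
    by_cases h0 : z = 0
    · subst h0
      simp only [bwdShift, if_pos rfl]
      have hfun : f = fun z => (w - z) / (1 - (starRingEnd ℂ) w * z) := funext hf
      have h1 : HasDerivAt (fun z : ℂ => w - z) (-1) 0 := by
        simpa using (hasDerivAt_id (0:ℂ)).const_sub w
      have h2 : HasDerivAt (fun z : ℂ => (1:ℂ) - (starRingEnd ℂ) w * z) (-((starRingEnd ℂ) w)) 0 := by
        simpa using ((hasDerivAt_id (0:ℂ)).const_mul ((starRingEnd ℂ) w)).const_sub (1:ℂ)
      have hd := h1.div h2 (by simpa using hdz)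
      have hd' : deriv (fun z : ℂ => (w - z) / (1 - (starRingEnd ℂ) w * z)) 0 = _ := hd.deriv
      rw [hfun, if_pos trivial, hd', hww]
      field_simp
      ring
    · simp only [bwdShift, if_neg h0, hf z, hf 0]
      rw [hww]
      field_simp
      have hdz' : 1 - z * (starRingEnd ℂ) w ≠ 0 := by rwa [mul_comm]
      field_simp
      ring
  refine ⟨part1, ?_⟩
  -- unit direction
  obtain ⟨u, hu1, hwu, hcwu⟩ : ∃ u : ℂ, ‖u‖ = 1 ∧ w = ((a:ℝ):ℂ) * u ∧
      (starRingEnd ℂ) w * u = ((a:ℝ):ℂ) := by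
    by_cases hw0 : w = 0
    · refine ⟨1, by simp, ?_, ?_⟩ <;> simp [hw0, ha_def]
    · have ha' : ((a:ℝ):ℂ) ≠ 0 := by
        simp [ha_def, hw0]
      refine ⟨w / ((a:ℝ):ℂ), ?_, ?_, ?_⟩
      · rw [norm_div, Complex.norm_real, Real.norm_of_nonneg ha0]
        exact div_self (by simpa [ha_def] using hw0)
      · field_simp
      · rw [mul_div_assoc', mul_comm ((starRingEnd ℂ) w) w, ← hww]
        field_simp
  have hNe : ((fun z => ‖bwdShift f z‖) '' Metric.ball (0:ℂ) 1).Nonempty :=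
    ⟨_, ⟨0, Metric.mem_ball_self one_pos, rfl⟩⟩
  have hNef : ((fun z => ‖f z‖) '' Metric.ball (0:ℂ) 1).Nonempty :=
    ⟨_, ⟨0, Metric.mem_ball_self one_pos, rfl⟩⟩
  have habs_num : ‖((a:ℝ):ℂ) ^ 2 - 1‖ = 1 - a ^ 2 := by
    have h1 : (((a:ℝ):ℂ) ^ 2 - 1) = ((a ^ 2 - 1 : ℝ) : ℂ) := by push_cast; ring
    rw [h1, Complex.norm_real, Real.norm_eq_abs, abs_of_nonpos (by nlinarith)]
    ring
  -- sup of Bf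
  have hsupBf : hInfNorm (bwdShift f) = 1 + a := by
    apply csSup_eq_of_forall_le_of_forall_lt_exists_gt hNe
    · rintro y ⟨z, hz, rfl⟩
      dsimp only
      have hz1 : ‖z‖ < 1 := by simpa using mem_ball_zero_iff.mp hz
      rw [part1 z hz, norm_div, habs_num, div_le_iff₀ (by linarith [hdlb z hz1])]
      nlinarith [hdlb z hz1]
    · intro y hy
      have h1a : (0:ℝ) < 1 - 1 * a := by linarith
      have hc : ContinuousAt (fun r : ℝ => (1 - a ^ 2) / (1 - r * a)) 1 :=
        ContinuousAt.div (by fun_prop) (by fun_prop) (ne_of_gt h1a)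
      have hval : (1 - a ^ 2) / (1 - a) = 1 + a := by
        rw [div_eq_iff (by linarith : (1:ℝ) - a ≠ 0)]; ring
      have hc' : Filter.Tendsto (fun r : ℝ => (1 - a ^ 2) / (1 - r * a)) (nhds 1)
          (nhds (1 + a)) := by simpa [hval] using hc.tendsto
      have hev : ∀ᶠ r in nhdsWithin 1 (Set.Iio 1), y < (1 - a ^ 2) / (1 - r * a) ∧
          r ∈ Set.Ioo (0:ℝ) 1 :=
        ((hc'.eventually (eventually_gt_nhds hy)).filter_mono nhdsWithin_le_nhds).and
          (Filter.eventually_mem_set.mpr (Ioo_mem_nhdsLT_of_mem ⟨by norm_num, le_refl 1⟩))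
      obtain ⟨r, hyr, hr0, hr1⟩ := hev.exists
      have hra : r * a < 1 := by nlinarith
      have hzball : ((r:ℝ):ℂ) * u ∈ Metric.ball (0:ℂ) 1 := by
        rw [mem_ball_zero_iff]
        simp [norm_mul, hu1, abs_of_pos hr0, hr1]
      refine ⟨‖bwdShift f (((r:ℝ):ℂ) * u)‖, ⟨_, hzball, rfl⟩, ?_⟩
      rw [part1 _ hzball]
      have hden2 : (1:ℂ) - (starRingEnd ℂ) w * (((r:ℝ):ℂ) * u) = ((1 - r * a : ℝ) : ℂ) := by
        rw [mul_comm ((r:ℝ):ℂ) u, ← mul_assoc, hcwu]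
        push_cast; ring
      rw [norm_div, habs_num, hden2, Complex.norm_real, Real.norm_eq_abs, abs_of_pos (by linarith)]
      exact hyr
  -- sup of f
  have hsupf : hInfNorm f = 1 := by
    apply csSup_eq_of_forall_le_of_forall_lt_exists_gt hNef
    · rintro y ⟨z, hz, rfl⟩
      dsimp only
      have hz1 : ‖z‖ < 1 := by simpa using mem_ball_zero_iff.mp hz
      have hDpos : 0 < ‖1 - (starRingEnd ℂ) w * z‖ := by
        linarith [hdlb z hz1]
      rw [hf z, norm_div, div_le_one hDpos]
      have hsq : Complex.normSq (w - z) ≤ Complex.normSq (1 - (starRingEnd ℂ) w * z) := by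
        rw [Complex.normSq_sub, Complex.normSq_sub]
        have hre : (1 * (starRingEnd ℂ) ((starRingEnd ℂ) w * z)).re = (w * (starRingEnd ℂ) z).re := by
          simp [map_mul, mul_comm]
        rw [hre]
        simp only [Complex.normSq_one, Complex.normSq_mul, Complex.normSq_conj]
        have h1 : Complex.normSq w = a ^ 2 := (Complex.sq_norm w).symm
        have h2 : Complex.normSq z = ‖z‖ ^ 2 := (Complex.sq_norm z).symm
        nlinarith [mul_nonneg (by nlinarith : (0:ℝ) ≤ 1 - a ^ 2)
          (by nlinarith [norm_nonneg z] : (0:ℝ) ≤ 1 - ‖z‖ ^ 2)]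
      rw [← Complex.sq_norm, ← Complex.sq_norm] at hsq
      exact (sq_le_sq₀ (norm_nonneg _) (norm_nonneg _)).mp hsq
    · intro y hy
      have h1a : (0:ℝ) < 1 + 1 * a := by linarith
      have hc : ContinuousAt (fun r : ℝ => (a + r) / (1 + r * a)) 1 :=
        ContinuousAt.div (by fun_prop) (by fun_prop) (ne_of_gt h1a)
      have hval : (a + 1) / (1 + a) = 1 := by
        rw [div_eq_iff (by linarith : (1:ℝ) + a ≠ 0)]; ring
      have hc' : Filter.Tendsto (fun r : ℝ => (a + r) / (1 + r * a)) (nhds 1) (nhds 1) := by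
        simpa [hval] using hc.tendsto
      have hev : ∀ᶠ r in nhdsWithin 1 (Set.Iio 1), y < (a + r) / (1 + r * a) ∧
          r ∈ Set.Ioo (0:ℝ) 1 :=
        ((hc'.eventually (eventually_gt_nhds hy)).filter_mono nhdsWithin_le_nhds).and
          (Filter.eventually_mem_set.mpr (Ioo_mem_nhdsLT_of_mem ⟨by norm_num, le_refl 1⟩))
      obtain ⟨r, hyr, hr0, hr1⟩ := hev.exists
      have hzball : -(((r:ℝ):ℂ) * u) ∈ Metric.ball (0:ℂ) 1 := by
        rw [mem_ball_zero_iff]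
        simp [norm_mul, hu1, abs_of_pos hr0, hr1]
      refine ⟨‖f (-(((r:ℝ):ℂ) * u))‖, ⟨_, hzball, rfl⟩, ?_⟩
      rw [hf]
      have hnum : w - -(((r:ℝ):ℂ) * u) = ((a + r : ℝ) : ℂ) * u := by
        rw [hwu]; push_cast; ring
      have hden2 : (1:ℂ) - (starRingEnd ℂ) w * -(((r:ℝ):ℂ) * u) = ((1 + r * a : ℝ) : ℂ) := by
        have : (starRingEnd ℂ) w * (((r:ℝ):ℂ) * u) = ((r:ℝ):ℂ) * (((a:ℝ)):ℂ) := by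
          rw [mul_comm ((r:ℝ):ℂ) u, ← mul_assoc, hcwu]; ring
        rw [mul_neg, sub_neg_eq_add, this]
        push_cast; ring
      rw [hnum, hden2, norm_div, norm_mul, hu1, Complex.norm_real, Complex.norm_real,
          Real.norm_eq_abs, Real.norm_eq_abs,
        abs_of_pos (by linarith), abs_of_pos (by nlinarith), mul_one]
      exact hyr
  exact ⟨hsupBf, hsupf, by rw [hsupBf, hsupf, mul_one]⟩
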